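/- Suppose the sequences a_0(n), a_1(n) satisfy 2a_0(n) + a_1(n) = 1 and f : [0,1] → ℝ satisfies the Lipschitz condition of order r with constant k, i.e. |f(x_1) − f(x_2)| ≤ k|x_1 − x_2|^r for all x_1, x_2 ∈ [0,1], where 0 < r ≤ 1 and k > 0. Then for every n ≥ 1 and every x ∈ [0,1], |D_n^{M,1}(f; x) − f(x)| ≤ (3|a_1(n)| + 1)(1 + √2) k n^{−r/2}. -/

import Mathlib

open Filter Topology

/-- Bernstein basis polynomial `p_{n,k}(x)`, zero when `k < 0` or `k > n`. -/
noncomputable def bern (n : ℕ) (k : ℤ) (x : ℝ) : ℝ :=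
  if 0 ≤ k ∧ k ≤ (n : ℤ) then (n.choose k.toNat : ℝ) * x ^ k.toNat * (1 - x) ^ (n - k.toNat)
  else 0

/-- Modified Bernstein basis `p_{n,k}^{M,1}(x)` of Khosravian-Arab et al. -/
noncomputable def pM1 (a0 a1 : ℕ → ℝ) (n : ℕ) (k : ℤ) (x : ℝ) : ℝ :=
  (a1 n * x + a0 n) * bern (n - 1) k x + (a1 n * (1 - x) + a0 n) * bern (n - 1) (k - 1) x

/-- First-order modified Durrmeyer operator `D_n^{M,1}(f;x)`. -/
noncomputable def DM1 (a0 a1 : ℕ → ℝ) (n : ℕ) (f : ℝ → ℝ) (x : ℝ) : ℝ :=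
  ((n : ℝ) + 1) * ∑ k ∈ Finset.range (n + 1),
    pM1 a0 a1 n k x * ∫ t in (0:ℝ)..1, bern n k t * f t

lemma beta_nat (a b : ℕ) :
    ∫ t in (0:ℝ)..1, t ^ a * (1 - t) ^ b
      = (a.factorial : ℝ) * b.factorial / (a + b + 1).factorial := by
  induction a generalizing b with
  | zero =>
    simp only [pow_zero, one_mul]
    rw [intervalIntegral.integral_comp_sub_left (fun t : ℝ => t ^ b) 1]
    simp [integral_pow]
    rw [Nat.factorial_succ]
    push_cast
    field_simp
  | succ a ih =>
    have hIBP := intervalIntegral.integral_mul_deriv_eq_deriv_mul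
      (u := fun t : ℝ => t ^ (a + 1)) (u' := fun t : ℝ => (a + 1 : ℝ) * t ^ a)
      (v := fun t : ℝ => -(1 - t) ^ (b + 1) / (b + 1)) (v' := fun t : ℝ => (1 - t) ^ b)
      (a := (0:ℝ)) (b := (1:ℝ))
      (fun t _ => by
        simpa using (hasDerivAt_pow (a+1) t))
      (fun t _ => by
        have h1 : HasDerivAt (fun t : ℝ => (1 - t)) (-1) t := by
          simpa using (hasDerivAt_id t).const_sub 1
        have h2 : HasDerivAt (fun t : ℝ => (1 - t) ^ (b+1))
            ((b+1 : ℝ) * (1 - t) ^ b * (-1)) t := (h1.pow (b+1)).congr_deriv (by push_cast; ring)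
        have h3 := (h2.div_const ((b:ℝ)+1)).neg
        have hb : ((b:ℝ)+1) ≠ 0 := by positivity
        convert h3 using 1
        · ext s; push_cast; ring
        · ext s; simp only [Pi.neg_apply]; ring
        · field_simp
      )
      (by apply Continuous.intervalIntegrable; continuity)
      (by apply Continuous.intervalIntegrable; continuity)
    rw [hIBP]
    have key : (∫ t in (0:ℝ)..1, ((a:ℝ)+1) * t ^ a * (-(1 - t) ^ (b + 1) / ((b:ℝ) + 1)))
        = (-(((a:ℝ)+1) / ((b:ℝ)+1))) * ∫ t in (0:ℝ)..1, t ^ a * (1 - t) ^ (b+1) := by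
      rw [← intervalIntegral.integral_const_mul]
      congr 1; ext t; ring
    push_cast
    rw [key, ih (b+1)]
    have harg : a + (b+1) + 1 = a + 1 + b + 1 := by omega
    rw [harg]
    have h1 : ((a+1+b+1).factorial : ℝ) ≠ 0 := by positivity
    have h2 : ((b:ℝ)+1) ≠ 0 := by positivity
    rw [Nat.factorial_succ (a), Nat.factorial_succ (b)]
    push_cast
    field_simp
    ring

lemma bern_of_le {n j : ℕ} (h : j ≤ n) (x : ℝ) :
    bern n (j : ℤ) x = (n.choose j : ℝ) * x ^ j * (1 - x) ^ (n - j) := by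
  simp [bern, h]

lemma bern_eval {n j : ℕ} (h : j ≤ n) (x : ℝ) :
    bern n (j : ℤ) x = (bernsteinPolynomial ℝ n j).eval x := by
  rw [bern_of_le h]; simp [bernsteinPolynomial]

lemma bern_zero_of_gt {n : ℕ} {k : ℤ} (h : (n : ℤ) < k) (x : ℝ) : bern n k x = 0 := by
  simp only [bern, ite_eq_right_iff]; intro ⟨h1, h2⟩; omega

lemma bern_zero_of_neg {n : ℕ} {k : ℤ} (h : k < 0) (x : ℝ) : bern n k x = 0 := by
  simp only [bern, ite_eq_right_iff]; intro ⟨h1, h2⟩; omega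

lemma bern_nonneg {n : ℕ} {k : ℤ} {x : ℝ} (hx : x ∈ Set.Icc (0:ℝ) 1) : 0 ≤ bern n k x := by
  unfold bern
  split
  · have h0 : (0:ℝ) ≤ x := hx.1
    have h1 : (0:ℝ) ≤ 1 - x := by linarith [hx.2]
    positivity
  · exact le_refl 0

lemma int_bern_mom (p n j : ℕ) (h : j ≤ n) :
    ∫ t in (0:ℝ)..1, t ^ p * bern n (j : ℤ) t
      = (n.choose j : ℝ) * (j + p).factorial * (n - j).factorial / (n + p + 1).factorial := by
  have : (fun t : ℝ => t ^ p * bern n (j:ℤ) t)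
      = fun t : ℝ => (n.choose j : ℝ) * (t ^ (j + p) * (1 - t) ^ (n - j)) := by
    ext t; rw [bern_of_le h]; ring
  rw [this, intervalIntegral.integral_const_mul, beta_nat]
  have : j + p + (n - j) + 1 = n + p + 1 := by omega
  rw [this]; ring

lemma choose_fac {n j : ℕ} (h : j ≤ n) :
    (n.choose j : ℝ) * j.factorial * (n - j).factorial = n.factorial := by
  exact_mod_cast congrArg (Nat.cast (R := ℝ)) (Nat.choose_mul_factorial_mul_factorial h)

lemma int_bern0 {n j : ℕ} (h : j ≤ n) :
    ∫ t in (0:ℝ)..1, bern n (j : ℤ) t = 1 / ((n:ℝ) + 1) := by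
  have := int_bern_mom 0 n j h
  simp only [pow_zero, one_mul, Nat.add_zero] at this
  rw [this, Nat.factorial_succ]
  have h1 : (n.factorial : ℝ) ≠ 0 := by positivity
  have h2 := choose_fac h
  push_cast
  have h3 : ((n:ℝ)+1) ≠ 0 := by positivity
  field_simp
  linear_combination h2

lemma int_bern1 {n j : ℕ} (h : j ≤ n) :
    ∫ t in (0:ℝ)..1, t * bern n (j : ℤ) t = ((j:ℝ) + 1) / (((n:ℝ) + 1) * ((n:ℝ) + 2)) := by
  have := int_bern_mom 1 n j h
  simp only [pow_one] at this
  rw [this]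
  have e1 : n + 1 + 1 = (n+1) + 1 := rfl
  rw [show j + 1 = j.succ from rfl, Nat.factorial_succ,
    show n + 1 + 1 = (n+1).succ from rfl, Nat.factorial_succ, Nat.factorial_succ]
  have h1 : (n.factorial : ℝ) ≠ 0 := by positivity
  have h2 := choose_fac h
  push_cast
  push_cast at h2
  have h3 : ((n:ℝ)+1) ≠ 0 := by positivity
  have h4 : ((n:ℝ)+2) ≠ 0 := by positivity
  field_simp
  linear_combination ((n:ℝ)+2) * h2

lemma int_bern2 {n j : ℕ} (h : j ≤ n) :
    ∫ t in (0:ℝ)..1, t ^ 2 * bern n (j : ℤ) t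
      = ((j:ℝ) + 1) * ((j:ℝ) + 2) / (((n:ℝ) + 1) * ((n:ℝ) + 2) * ((n:ℝ) + 3)) := by
  have := int_bern_mom 2 n j h
  rw [this]
  rw [show j + 2 = (j+1).succ from rfl, Nat.factorial_succ,
    show j + 1 = j.succ from rfl, Nat.factorial_succ,
    show n + 2 + 1 = (n+2).succ from rfl, Nat.factorial_succ,
    show n + 2 = (n+1).succ from rfl, Nat.factorial_succ, Nat.factorial_succ]
  have h1 : (n.factorial : ℝ) ≠ 0 := by positivity
  have h2 := choose_fac h
  push_cast
  push_cast at h2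
  have h3 : ((n:ℝ)+1) ≠ 0 := by positivity
  have h4 : ((n:ℝ)+2) ≠ 0 := by positivity
  have h5 : ((n:ℝ)+3) ≠ 0 := by positivity
  field_simp
  linear_combination ((j:ℝ)+2)*((n:ℝ)+2)*((n:ℝ)+3) * h2

lemma natmul_pred (j : ℕ) : ((j * (j - 1) : ℕ) : ℝ) = (j:ℝ)^2 - (j:ℝ) := by
  cases j with
  | zero => simp
  | succ i => push_cast [Nat.succ_sub_one]; ring

lemma bsum0 (m : ℕ) (x : ℝ) :
    ∑ j ∈ Finset.range (m+1), (bernsteinPolynomial ℝ m j).eval x = 1 := by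
  have := congrArg (Polynomial.eval x) (bernsteinPolynomial.sum ℝ m)
  simpa [Polynomial.eval_finset_sum] using this

lemma bsum1 (m : ℕ) (x : ℝ) :
    ∑ j ∈ Finset.range (m+1), (j:ℝ) * (bernsteinPolynomial ℝ m j).eval x = (m:ℝ) * x := by
  have := congrArg (Polynomial.eval x) (bernsteinPolynomial.sum_smul ℝ m)
  simpa [Polynomial.eval_finset_sum] using this

lemma bsum2 (m : ℕ) (x : ℝ) :
    ∑ j ∈ Finset.range (m+1), (j:ℝ)^2 * (bernsteinPolynomial ℝ m j).eval x
      = (m:ℝ) * ((m:ℝ) - 1) * x^2 + (m:ℝ) * x := by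
  have h2 := congrArg (Polynomial.eval x) (bernsteinPolynomial.sum_mul_smul ℝ m)
  simp only [Polynomial.eval_finset_sum, Polynomial.eval_smul, nsmul_eq_mul,
    Polynomial.eval_mul, Polynomial.eval_pow, Polynomial.eval_natCast, Polynomial.eval_X] at h2
  rw [Finset.sum_congr rfl (fun j _ => by rw [natmul_pred j])] at h2
  rw [natmul_pred m] at h2
  have h1 := bsum1 m x
  have h0 : ∑ j ∈ Finset.range (m+1),
      (((j:ℝ)^2 - (j:ℝ)) * (bernsteinPolynomial ℝ m j).eval x)
      = ∑ j ∈ Finset.range (m+1), ((j:ℝ)^2 * (bernsteinPolynomial ℝ m j).eval x)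
        - ∑ j ∈ Finset.range (m+1), ((j:ℝ) * (bernsteinPolynomial ℝ m j).eval x) := by
    rw [← Finset.sum_sub_distrib]; congr 1; ext j; ring
  rw [h0, h1] at h2
  nlinarith [h2]

lemma bsum_quad (m : ℕ) (x : ℝ) (A B C : ℝ) :
    ∑ j ∈ Finset.range (m+1),
        (A * (j:ℝ)^2 + B * (j:ℝ) + C) * (bernsteinPolynomial ℝ m j).eval x
      = A * ((m:ℝ) * ((m:ℝ) - 1) * x^2 + (m:ℝ) * x) + B * ((m:ℝ) * x) + C := by
  have expand : ∀ j ∈ Finset.range (m+1),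
      (A * (j:ℝ)^2 + B * (j:ℝ) + C) * (bernsteinPolynomial ℝ m j).eval x
        = A * ((j:ℝ)^2 * (bernsteinPolynomial ℝ m j).eval x)
          + B * ((j:ℝ) * (bernsteinPolynomial ℝ m j).eval x)
          + C * ((bernsteinPolynomial ℝ m j).eval x) := by
    intro j _; ring
  rw [Finset.sum_congr rfl expand]
  rw [Finset.sum_add_distrib, Finset.sum_add_distrib, ← Finset.mul_sum, ← Finset.mul_sum,
    ← Finset.mul_sum, bsum0, bsum1, bsum2]
  ring

lemma bern_cont {n j : ℕ} (h : j ≤ n) : Continuous (fun t : ℝ => bern n (j:ℤ) t) := by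
  have : (fun t : ℝ => bern n (j:ℤ) t)
      = fun t : ℝ => (n.choose j : ℝ) * t ^ j * (1 - t) ^ (n - j) := funext (bern_of_le h)
  rw [this]
  exact (continuous_const.mul (continuous_pow j)).mul
    ((continuous_const.sub continuous_id).pow (n - j))

lemma Qval {n i : ℕ} (h : i ≤ n) (x : ℝ) :
    ∫ t in (0:ℝ)..1, bern n (i:ℤ) t * (1 + (n:ℝ) * (t - x)^2)
      = (1/((n:ℝ)+1)) * (1 + (n:ℝ)*((i:ℝ)+1)*((i:ℝ)+2)/(((n:ℝ)+2)*((n:ℝ)+3))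
          - 2*x*((i:ℝ)+1)*(n:ℝ)/((n:ℝ)+2) + (n:ℝ)*x^2) := by
  have hc := bern_cont h
  have expand : (fun t : ℝ => bern n (i:ℤ) t * (1 + (n:ℝ) * (t - x)^2))
      = fun t : ℝ => ((1 + (n:ℝ)*x^2) * bern n (i:ℤ) t + (-2*(n:ℝ)*x) * (t * bern n (i:ℤ) t))
          + (n:ℝ) * (t^2 * bern n (i:ℤ) t) := by
    ext t; ring
  have i1 : IntervalIntegrable (fun t : ℝ => (1 + (n:ℝ)*x^2) * bern n (i:ℤ) t)
      MeasureTheory.volume 0 1 := ((continuous_const.mul hc).intervalIntegrable 0 1)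
  have i2 : IntervalIntegrable (fun t : ℝ => (-2*(n:ℝ)*x) * (t * bern n (i:ℤ) t))
      MeasureTheory.volume 0 1 :=
    ((continuous_const.mul (continuous_id.mul hc)).intervalIntegrable 0 1)
  have i3 : IntervalIntegrable (fun t : ℝ => (n:ℝ) * (t^2 * bern n (i:ℤ) t))
      MeasureTheory.volume 0 1 :=
    ((continuous_const.mul ((continuous_pow 2).mul hc)).intervalIntegrable 0 1)
  rw [expand, intervalIntegral.integral_add (i1.add i2) i3,
    intervalIntegral.integral_add i1 i2,
    intervalIntegral.integral_const_mul, intervalIntegral.integral_const_mul,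
    intervalIntegral.integral_const_mul, int_bern0 h, int_bern1 h, int_bern2 h]
  have h1 : ((n:ℝ)+1) ≠ 0 := by positivity
  have h2 : ((n:ℝ)+2) ≠ 0 := by positivity
  have h3 : ((n:ℝ)+3) ≠ 0 := by positivity
  field_simp
  ring

lemma rpow_bound {r : ℝ} (hr0 : 0 < r) (hr1 : r ≤ 1) {n : ℕ} (hn : 1 ≤ n) (s : ℝ) :
    |s| ^ r ≤ (n:ℝ) ^ (-(r/2)) * (1 + (n:ℝ) * s^2) := by
  have hN : (0:ℝ) < (n:ℝ) := by exact_mod_cast Nat.lt_of_lt_of_le Nat.zero_lt_one hn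
  set u := Real.sqrt n * |s| with hu
  have hu0 : 0 ≤ u := mul_nonneg (Real.sqrt_nonneg _) (abs_nonneg _)
  have husq : u ^ 2 = (n:ℝ) * s ^ 2 := by
    rw [hu, mul_pow, Real.sq_sqrt hN.le, sq_abs]
  have hur : u ^ r ≤ 1 + u ^ 2 := by
    rcases le_total u 1 with h | h
    · have := Real.rpow_le_one hu0 h hr0.le
      nlinarith [sq_nonneg u]
    · have h1 : u ^ r ≤ u ^ (1:ℝ) := Real.rpow_le_rpow_of_exponent_le h hr1
      rw [Real.rpow_one] at h1
      nlinarith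
  have hsplit : u ^ r = (n:ℝ) ^ (r/2) * |s| ^ r := by
    rw [hu, Real.mul_rpow (Real.sqrt_nonneg _) (abs_nonneg _)]
    congr 1
    rw [Real.sqrt_eq_rpow, ← Real.rpow_mul hN.le]
    ring_nf
  have hpos : (0:ℝ) < (n:ℝ) ^ (r/2) := Real.rpow_pos_of_pos hN _
  have habs : |s| ^ r = (n:ℝ) ^ (-(r/2)) * u ^ r := by
    rw [hsplit, Real.rpow_neg hN.le]
    field_simp
  rw [habs, husq] at *
  have := mul_le_mul_of_nonneg_left hur (le_of_lt (Real.rpow_pos_of_pos hN (-(r/2))))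
  linarith

set_option maxHeartbeats 2000000 in
theorem DM1_lipschitz_estimate (a0 a1 : ℕ → ℝ)
    (hA : ∀ n, 2 * a0 n + a1 n = 1)
    (f : ℝ → ℝ) (r k : ℝ) (hr0 : 0 < r) (hr1 : r ≤ 1) (hk : 0 < k)
    (hf : ∀ x₁ ∈ Set.Icc (0:ℝ) 1, ∀ x₂ ∈ Set.Icc (0:ℝ) 1, |f x₁ - f x₂| ≤ k * |x₁ - x₂| ^ r)
    (n : ℕ) (hn : 1 ≤ n) (x : ℝ) (hx : x ∈ Set.Icc (0:ℝ) 1) :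
    |DM1 a0 a1 n f x - f x|
      ≤ (3 * |a1 n| + 1) * (1 + Real.sqrt 2) * k * (n : ℝ) ^ (-(r / 2)) := by
  obtain ⟨m, rfl⟩ : ∃ m, n = m + 1 := ⟨n - 1, by omega⟩
  obtain ⟨hx0, hx1⟩ := hx
  set N : ℝ := ((m+1:ℕ) : ℝ) with hNdef
  have hNm : N = (m:ℝ) + 1 := by rw [hNdef]; push_cast; ring
  have hN : (0:ℝ) < N := by rw [hNm]; positivity
  have hN1 : (1:ℝ) ≤ N := by rw [hNm]; simp [Nat.cast_nonneg]
  -- continuity of f on [0,1]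
  have hfc : ContinuousOn f (Set.Icc (0:ℝ) 1) := by
    intro y hy
    have h1 : Filter.Tendsto (fun t : ℝ => |t - y|) (nhdsWithin y (Set.Icc 0 1)) (nhds 0) := by
      have hcont : Continuous (fun t : ℝ => |t - y|) := (continuous_id.sub continuous_const).abs
      have := hcont.continuousWithinAt (s := Set.Icc (0:ℝ) 1) (x := y)
      simpa [ContinuousWithinAt] using this
    have h2 : Filter.Tendsto (fun t : ℝ => k * |t - y| ^ r)
        (nhdsWithin y (Set.Icc 0 1)) (nhds 0) := by
      have hc : ContinuousAt (fun s : ℝ => s ^ r) 0 :=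
        Real.continuousAt_rpow_const 0 r (Or.inr hr0.le)
      have h3 := hc.tendsto.comp h1
      rw [Real.zero_rpow (ne_of_gt hr0)] at h3
      simpa using h3.const_mul k
    have key : Filter.Tendsto (fun t => |f t - f y|)
        (nhdsWithin y (Set.Icc 0 1)) (nhds 0) := by
      refine squeeze_zero' (Filter.Eventually.of_forall fun t => abs_nonneg _) ?_ h2
      filter_upwards [self_mem_nhdsWithin] with t ht
      exact hf t ht y hy
    have key2 : Filter.Tendsto (fun t => dist (f t) (f y))
        (nhdsWithin y (Set.Icc 0 1)) (nhds 0) := by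
      simpa [Real.dist_eq] using key
    exact tendsto_iff_dist_tendsto_zero.mpr key2
  -- Bernstein partition of unity
  have hconv : ∀ i : ℕ, i ≤ m → bern m (i:ℤ) x = (bernsteinPolynomial ℝ m i).eval x :=
    fun i h => bern_eval h x
  have hb1 : ∑ i ∈ Finset.range (m+1+1), bern m (i:ℤ) x = 1 := by
    rw [Finset.sum_range_succ]
    have hz : bern m ((m+1:ℕ):ℤ) x = 0 := bern_zero_of_gt (by push_cast; omega) x
    have hcongr : ∑ i ∈ Finset.range (m+1), bern m (i:ℤ) x
        = ∑ i ∈ Finset.range (m+1), (bernsteinPolynomial ℝ m i).eval x := by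
      apply Finset.sum_congr rfl
      intro i hi
      exact hconv i (by have := Finset.mem_range.mp hi; omega)
    rw [hz, add_zero, hcongr]
    exact bsum0 m x
  have hb2 : ∑ i ∈ Finset.range (m+1+1), bern m ((i:ℤ)-1) x = 1 := by
    rw [Finset.sum_range_succ']
    have hz : bern m (((0:ℕ):ℤ)-1) x = 0 := bern_zero_of_neg (by norm_num) x
    have hcongr : ∑ i ∈ Finset.range (m+1), bern m (((i+1:ℕ):ℤ)-1) x
        = ∑ i ∈ Finset.range (m+1), (bernsteinPolynomial ℝ m i).eval x := by
      apply Finset.sum_congr rfl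
      intro i hi
      have he : (((i+1:ℕ)):ℤ) - 1 = (i:ℤ) := by push_cast; ring
      rw [he]
      exact hconv i (by have := Finset.mem_range.mp hi; omega)
    rw [hz, add_zero, hcongr]
    exact bsum0 m x
  have hsum : ∑ i ∈ Finset.range (m+1+1), pM1 a0 a1 (m+1) i x = 1 := by
    simp only [pM1, Nat.add_sub_cancel]
    rw [Finset.sum_add_distrib, ← Finset.mul_sum, ← Finset.mul_sum, hb1, hb2]
    linarith [hA (m+1)]
  -- centered representation
  set F : ℕ → ℝ := fun i => ∫ t in (0:ℝ)..1, bern (m+1) i t * (f t - f x) with hF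
  have hintf : ∀ i : ℕ, i ≤ m+1 →
      (∫ t in (0:ℝ)..1, bern (m+1) (i:ℤ) t * f t) = F i + f x * (1/(N+1)) := by
    intro i hi
    have hcont := bern_cont (n := m+1) (j := i) hi
    have h1 : IntervalIntegrable (fun t => bern (m+1) (i:ℤ) t * f t)
        MeasureTheory.volume 0 1 := by
      apply ContinuousOn.intervalIntegrable
      rw [Set.uIcc_of_le zero_le_one]
      exact hcont.continuousOn.mul hfc
    have h2 : IntervalIntegrable (fun t => bern (m+1) (i:ℤ) t * f x)
        MeasureTheory.volume 0 1 :=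
      (hcont.mul continuous_const).intervalIntegrable 0 1
    have e1 : F i = (∫ t in (0:ℝ)..1, bern (m+1) (i:ℤ) t * f t)
        - ∫ t in (0:ℝ)..1, bern (m+1) (i:ℤ) t * f x := by
      rw [hF, ← intervalIntegral.integral_sub h1 h2]
      simp only [mul_sub]
    have e2 : (∫ t in (0:ℝ)..1, bern (m+1) (i:ℤ) t * f x) = f x * (1/(N+1)) := by
      rw [intervalIntegral.integral_mul_const, int_bern0 hi]
      rw [hNdef]; ring
    rw [e1, e2]; ring
  have hNe : N + 1 ≠ 0 := by positivity
  have hrep : DM1 a0 a1 (m+1) f x - f x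
      = (N+1) * ∑ i ∈ Finset.range (m+1+1), pM1 a0 a1 (m+1) i x * F i := by
    unfold DM1
    rw [Finset.sum_congr rfl (fun i hi => by
      rw [hintf i (by have := Finset.mem_range.mp hi; omega)])]
    have expand : ∀ i ∈ Finset.range (m+1+1),
        pM1 a0 a1 (m+1) i x * (F i + f x * (1/(N+1)))
          = pM1 a0 a1 (m+1) i x * F i + pM1 a0 a1 (m+1) i x * (f x * (1/(N+1))) := by
      intro i _; ring
    rw [Finset.sum_congr rfl expand, Finset.sum_add_distrib, ← Finset.sum_mul, hsum]
    rw [hNdef]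
    field_simp
    ring
  set ρ : ℝ := ((m+1:ℕ):ℝ) ^ (-(r/2)) with hρ
  have hρ0 : 0 ≤ ρ := Real.rpow_nonneg (by positivity) _
  set Q : ℕ → ℝ := fun i => ∫ t in (0:ℝ)..1, bern (m+1) i t * (1 + N * (t - x)^2) with hQ
  have hQ0 : ∀ i : ℕ, 0 ≤ Q i := by
    intro i
    apply intervalIntegral.integral_nonneg zero_le_one
    intro t ht
    have h1 : (0:ℝ) ≤ bern (m+1) i t := bern_nonneg ⟨ht.1, ht.2⟩
    positivity
  have hFb : ∀ i ∈ Finset.range (m+1+1), |F i| ≤ k * ρ * Q i := by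
    intro i hi
    have hi' : i ≤ m+1 := by have := Finset.mem_range.mp hi; omega
    have hcont := bern_cont (n := m+1) (j := i) hi'
    have hint1 : IntervalIntegrable (fun t => |bern (m+1) (i:ℤ) t * (f t - f x)|)
        MeasureTheory.volume 0 1 := by
      apply ContinuousOn.intervalIntegrable
      rw [Set.uIcc_of_le zero_le_one]
      exact (hcont.continuousOn.mul (hfc.sub continuousOn_const)).abs
    have hint2 : IntervalIntegrable
        (fun t => bern (m+1) (i:ℤ) t * (k * ρ * (1 + N * (t - x)^2)))
        MeasureTheory.volume 0 1 := by
      apply Continuous.intervalIntegrable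
      exact hcont.mul (continuous_const.mul (continuous_const.add
        (continuous_const.mul ((continuous_id.sub continuous_const).pow 2))))
    have step1 : |F i| ≤ ∫ t in (0:ℝ)..1, |bern (m+1) (i:ℤ) t * (f t - f x)| := by
      rw [hF]
      exact intervalIntegral.abs_integral_le_integral_abs zero_le_one
    have step2 : (∫ t in (0:ℝ)..1, |bern (m+1) (i:ℤ) t * (f t - f x)|)
        ≤ ∫ t in (0:ℝ)..1, bern (m+1) (i:ℤ) t * (k * ρ * (1 + N * (t - x)^2)) := by
      apply intervalIntegral.integral_mono_on zero_le_one hint1 hint2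
      intro t ht
      have hb0 : 0 ≤ bern (m+1) (i:ℤ) t := bern_nonneg ⟨ht.1, ht.2⟩
      rw [abs_mul, abs_of_nonneg hb0]
      apply mul_le_mul_of_nonneg_left ?_ hb0
      have hstep : |f t - f x| ≤ k * |t - x| ^ r := hf t ht x ⟨hx0, hx1⟩
      have hrp : |t - x| ^ r ≤ ρ * (1 + N * (t-x)^2) := by
        have := rpow_bound hr0 hr1 (n := m+1) (by omega) (t - x)
        rw [hρ, hNdef]
        exact this
      calc |f t - f x| ≤ k * |t - x| ^ r := hstep
        _ ≤ k * (ρ * (1 + N * (t-x)^2)) := mul_le_mul_of_nonneg_left hrp hk.le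
        _ = k * ρ * (1 + N * (t-x)^2) := by ring
    have step3 : (∫ t in (0:ℝ)..1, bern (m+1) (i:ℤ) t * (k * ρ * (1 + N * (t - x)^2)))
        = k * ρ * Q i := by
      rw [hQ, ← intervalIntegral.integral_const_mul]
      apply intervalIntegral.integral_congr
      intro t _
      ring
    calc |F i| ≤ _ := step1
      _ ≤ _ := step2
      _ = k * ρ * Q i := step3
  set c : ℝ := (|a1 (m+1)| + 1)/2 with hc
  have hc0 : 0 ≤ c := by positivity
  have hpb : ∀ i : ℕ, |pM1 a0 a1 (m+1) i x|
      ≤ c * (bern m (i:ℤ) x + bern m ((i:ℤ)-1) x) := by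
    intro i
    have ha0 : a0 (m+1) = (1 - a1 (m+1))/2 := by linarith [hA (m+1)]
    have hxx : |x - 1/2| ≤ 1/2 := by rw [abs_le]; constructor <;> linarith
    have h1 : |a1 (m+1) * x + a0 (m+1)| ≤ c := by
      rw [ha0, show a1 (m+1) * x + (1 - a1 (m+1))/2 = a1 (m+1) * (x - 1/2) + 1/2 by ring]
      calc |a1 (m+1) * (x - 1/2) + 1/2| ≤ |a1 (m+1) * (x - 1/2)| + |1/2| := abs_add_le _ _
        _ = |a1 (m+1)| * |x - 1/2| + 1/2 := by rw [abs_mul]; norm_num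
        _ ≤ |a1 (m+1)| * (1/2) + 1/2 :=
            add_le_add_left (mul_le_mul_of_nonneg_left hxx (abs_nonneg _)) _
        _ = c := by rw [hc]; ring
    have h2 : |a1 (m+1) * (1-x) + a0 (m+1)| ≤ c := by
      rw [ha0, show a1 (m+1) * (1-x) + (1 - a1 (m+1))/2 = a1 (m+1) * (1/2 - x) + 1/2 by ring]
      calc |a1 (m+1) * (1/2 - x) + 1/2| ≤ |a1 (m+1) * (1/2 - x)| + |1/2| := abs_add_le _ _
        _ = |a1 (m+1)| * |x - 1/2| + 1/2 := by rw [abs_mul, abs_sub_comm]; norm_num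
        _ ≤ |a1 (m+1)| * (1/2) + 1/2 :=
            add_le_add_left (mul_le_mul_of_nonneg_left hxx (abs_nonneg _)) _
        _ = c := by rw [hc]; ring
    have hbn1 : 0 ≤ bern m (i:ℤ) x := bern_nonneg ⟨hx0, hx1⟩
    have hbn2 : 0 ≤ bern m ((i:ℤ)-1) x := bern_nonneg ⟨hx0, hx1⟩
    simp only [pM1, Nat.add_sub_cancel]
    calc |(a1 (m+1) * x + a0 (m+1)) * bern m (i:ℤ) x
          + (a1 (m+1) * (1-x) + a0 (m+1)) * bern m ((i:ℤ)-1) x|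
        ≤ |(a1 (m+1) * x + a0 (m+1)) * bern m (i:ℤ) x|
          + |(a1 (m+1) * (1-x) + a0 (m+1)) * bern m ((i:ℤ)-1) x| := abs_add_le _ _
      _ = |a1 (m+1) * x + a0 (m+1)| * bern m (i:ℤ) x
          + |a1 (m+1) * (1-x) + a0 (m+1)| * bern m ((i:ℤ)-1) x := by
          rw [abs_mul, abs_mul, abs_of_nonneg hbn1, abs_of_nonneg hbn2]
      _ ≤ c * bern m (i:ℤ) x + c * bern m ((i:ℤ)-1) x :=
          add_le_add (mul_le_mul_of_nonneg_right h1 hbn1) (mul_le_mul_of_nonneg_right h2 hbn2)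
      _ = c * (bern m (i:ℤ) x + bern m ((i:ℤ)-1) x) := by ring
  -- the key moment bound
  have hS : ∑ i ∈ Finset.range (m+1+1),
      (bern m (i:ℤ) x + bern m ((i:ℤ)-1) x) * ((N+1) * Q i) ≤ 4 := by
    set A : ℝ := N/((N+2)*(N+3)) with hA2
    set B : ℝ := 3*N/((N+2)*(N+3)) - 2*x*N/(N+2) with hB2
    set C : ℝ := 1 + 2*N/((N+2)*(N+3)) - 2*x*N/(N+2) + N*x^2 with hC2
    have h1p : (0:ℝ) < N+1 := by linarith
    have h2p : (0:ℝ) < N+2 := by linarith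
    have h3p : (0:ℝ) < N+3 := by linarith
    have hq : ∀ i : ℕ, i ≤ m+1 → (N+1) * Q i = A*(i:ℝ)^2 + B*(i:ℝ) + C := by
      intro i hi
      have hqv := Qval hi x
      rw [← hNdef] at hqv
      simp only [hQ]
      rw [hqv, hA2, hB2, hC2]
      field_simp
      ring
    have hsplit : ∑ i ∈ Finset.range (m+1+1),
        (bern m (i:ℤ) x + bern m ((i:ℤ)-1) x) * ((N+1) * Q i)
        = (∑ i ∈ Finset.range (m+1+1), bern m (i:ℤ) x * ((N+1) * Q i))
          + ∑ i ∈ Finset.range (m+1+1), bern m ((i:ℤ)-1) x * ((N+1) * Q i) := by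
      rw [← Finset.sum_add_distrib]
      apply Finset.sum_congr rfl; intro i _; ring
    have hS1 : ∑ i ∈ Finset.range (m+1+1), bern m (i:ℤ) x * ((N+1) * Q i)
        = A * ((m:ℝ) * ((m:ℝ)-1) * x^2 + (m:ℝ)*x) + B * ((m:ℝ)*x) + C := by
      rw [Finset.sum_range_succ]
      have hz : bern m ((m+1:ℕ):ℤ) x = 0 := bern_zero_of_gt (by push_cast; omega) x
      rw [hz, zero_mul, add_zero]
      have hcongr : ∑ i ∈ Finset.range (m+1), bern m (i:ℤ) x * ((N+1) * Q i)
          = ∑ i ∈ Finset.range (m+1),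
              (A*(i:ℝ)^2 + B*(i:ℝ) + C) * (bernsteinPolynomial ℝ m i).eval x := by
        apply Finset.sum_congr rfl; intro i hi
        have him : i ≤ m := by have := Finset.mem_range.mp hi; omega
        rw [hconv i him, hq i (by omega)]
        ring
      rw [hcongr]; exact bsum_quad m x A B C
    have hS2 : ∑ i ∈ Finset.range (m+1+1), bern m ((i:ℤ)-1) x * ((N+1) * Q i)
        = A * ((m:ℝ) * ((m:ℝ)-1) * x^2 + (m:ℝ)*x) + (2*A+B) * ((m:ℝ)*x) + (A+B+C) := by
      rw [Finset.sum_range_succ']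
      have hz : bern m (((0:ℕ):ℤ)-1) x = 0 := bern_zero_of_neg (by norm_num) x
      rw [hz, zero_mul, add_zero]
      have hcongr : ∑ i ∈ Finset.range (m+1), bern m (((i+1:ℕ):ℤ)-1) x * ((N+1) * Q (i+1))
          = ∑ i ∈ Finset.range (m+1),
              (A*(i:ℝ)^2 + (2*A+B)*(i:ℝ) + (A+B+C)) * (bernsteinPolynomial ℝ m i).eval x := by
        apply Finset.sum_congr rfl; intro i hi
        have him : i ≤ m := by have := Finset.mem_range.mp hi; omega
        have he : (((i+1:ℕ)):ℤ) - 1 = (i:ℤ) := by push_cast; ring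
        rw [he, hconv i him, hq (i+1) (by omega)]
        push_cast
        ring
      rw [hcongr]; exact bsum_quad m x A (2*A+B) (A+B+C)
    rw [hsplit, hS1, hS2]
    have hM : (m:ℝ) = N - 1 := by rw [hNm]; ring
    rw [hM]
    have key : A * ((N-1) * ((N-1)-1) * x^2 + (N-1)*x) + B * ((N-1)*x) + C
        + (A * ((N-1) * ((N-1)-1) * x^2 + (N-1)*x) + (2*A+B) * ((N-1)*x) + (A+B+C))
        = 2 + (N*(8 + (4*N-28)*(x*(1-x))))/((N+2)*(N+3)) := by
      rw [hA2, hB2, hC2]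
      field_simp
      ring
    rw [key]
    have hy0 : 0 ≤ x*(1-x) := mul_nonneg hx0 (by linarith)
    have hy1 : x*(1-x) ≤ 1/4 := by nlinarith [sq_nonneg (x - 1/2)]
    have hdiv : (N*(8 + (4*N-28)*(x*(1-x))))/((N+2)*(N+3)) ≤ 2 := by
      rw [div_le_iff₀ (by positivity)]
      nlinarith [mul_nonneg (mul_pos hN hN).le (by linarith : (0:ℝ) ≤ 1/4 - x*(1-x)),
        mul_nonneg hN.le hy0]
    linarith
  -- combine
  have hmain : |DM1 a0 a1 (m+1) f x - f x| ≤ c * k * ρ * 4 := by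
    rw [hrep, abs_mul, abs_of_nonneg (by positivity : (0:ℝ) ≤ N+1)]
    have t1 : |∑ i ∈ Finset.range (m+1+1), pM1 a0 a1 (m+1) i x * F i|
        ≤ ∑ i ∈ Finset.range (m+1+1), (c * (bern m (i:ℤ) x + bern m ((i:ℤ)-1) x)) * (k * ρ * Q i) := by
      refine le_trans (Finset.abs_sum_le_sum_abs _ _) (Finset.sum_le_sum ?_)
      intro i hi
      rw [abs_mul]
      have hnn : 0 ≤ c * (bern m (i:ℤ) x + bern m ((i:ℤ)-1) x) :=
        mul_nonneg hc0 (add_nonneg (bern_nonneg ⟨hx0, hx1⟩) (bern_nonneg ⟨hx0, hx1⟩))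
      exact mul_le_mul (hpb i) (hFb i hi) (abs_nonneg _) hnn
    have t2 : (N+1) * ∑ i ∈ Finset.range (m+1+1),
          (c * (bern m (i:ℤ) x + bern m ((i:ℤ)-1) x)) * (k * ρ * Q i)
        = (c * k * ρ) * ∑ i ∈ Finset.range (m+1+1),
          (bern m (i:ℤ) x + bern m ((i:ℤ)-1) x) * ((N+1) * Q i) := by
      rw [Finset.mul_sum, Finset.mul_sum]
      apply Finset.sum_congr rfl
      intro i _
      ring
    calc (N+1) * |∑ i ∈ Finset.range (m+1+1), pM1 a0 a1 (m+1) i x * F i|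
        ≤ (N+1) * ∑ i ∈ Finset.range (m+1+1),
            (c * (bern m (i:ℤ) x + bern m ((i:ℤ)-1) x)) * (k * ρ * Q i) :=
          mul_le_mul_of_nonneg_left t1 (by positivity)
      _ = (c * k * ρ) * ∑ i ∈ Finset.range (m+1+1),
            (bern m (i:ℤ) x + bern m ((i:ℤ)-1) x) * ((N+1) * Q i) := t2
      _ ≤ (c * k * ρ) * 4 := mul_le_mul_of_nonneg_left hS (by positivity)
      _ = c * k * ρ * 4 := by ring
  have hfin : c * k * ρ * 4 ≤ (3 * |a1 (m+1)| + 1) * (1 + Real.sqrt 2) * k * ρ := by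
    have hs2 : (1.4:ℝ) ≤ Real.sqrt 2 := by
      rw [show (1.4:ℝ) = Real.sqrt (1.4^2) from (Real.sqrt_sq (by norm_num)).symm]
      apply Real.sqrt_le_sqrt; norm_num
    have ha : (0:ℝ) ≤ |a1 (m+1)| := abs_nonneg _
    have hkρ : 0 ≤ k * ρ := mul_nonneg hk.le hρ0
    have hcc : c * 4 ≤ (3 * |a1 (m+1)| + 1) * (1 + Real.sqrt 2) := by
      rw [hc]; nlinarith
    calc c * k * ρ * 4 = (c * 4) * (k * ρ) := by ring
      _ ≤ ((3 * |a1 (m+1)| + 1) * (1 + Real.sqrt 2)) * (k * ρ) :=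
          mul_le_mul_of_nonneg_right hcc hkρ
      _ = (3 * |a1 (m+1)| + 1) * (1 + Real.sqrt 2) * k * ρ := by ring
  exact le_trans hmain hfin
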